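/- Let λ, μ, ν be integer partitions. If (λ, μ, ν) is either (⊞,⊟)-storable or (⊟,⊞)-storable, then λ + ν and μ are 0-interlaced. -/
import Mathlib


/-- An integer partition, modeled as a function `l : ℕ → ℕ` where `l i` is the part
`λ_{i+1}` (0-indexed): weakly decreasing with only finitely many nonzero entries. -/
def IsPartition (l : ℕ → ℕ) : Prop :=
  (∀ i, l (i + 1) ≤ l i) ∧ ∃ N, ∀ i, N ≤ i → l i = 0

/-- `(l, m)` is a storable pair: `λ_i ≥ μ_i ≥ λ_{i+1}` for all `i ≥ 1` (0-indexed). -/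
def StorablePair (l m : ℕ → ℕ) : Prop :=
  ∀ i, m i ≤ l i ∧ l (i + 1) ≤ m i

/-- `r` is the integer partition `λ + ν` whose multiset of (nonzero) parts is the disjoint
union of the multisets of parts of `λ` and of `ν`. -/
def IsPartitionSum (r l n : ℕ → ℕ) : Prop :=
  IsPartition r ∧ ∀ k, 0 < k → {i | r i = k}.ncard = {i | l i = k}.ncard + {i | n i = k}.ncard

/-- `ρ` and `μ` are `0`-interlaced: `ρ_1 ≥ μ_1 ≥ ρ_2 ≥ ρ_3 ≥ μ_2 ≥ ρ_4 ≥ …`,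
i.e. `ρ_{2k−1} ≥ μ_k ≥ ρ_{2k}` for all `k ≥ 1` (0-indexed below). -/
def Interlaced0 (r m : ℕ → ℕ) : Prop :=
  ∀ j, m j ≤ r (2 * j) ∧ r (2 * j + 1) ≤ m j

lemma part_anti {p : ℕ → ℕ} (hp : IsPartition p) : Antitone p :=
  antitone_nat_of_succ_le hp.1

lemma finite_ge {p : ℕ → ℕ} (hp : IsPartition p) {v : ℕ} (hv : 0 < v) :
    {i | v ≤ p i}.Finite := by
  obtain ⟨N, hN⟩ := hp.2
  apply (Set.finite_Iio N).subset
  intro i hi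
  simp only [Set.mem_setOf_eq] at hi
  simp only [Set.mem_Iio]
  by_contra hcon
  push_neg at hcon
  rw [hN i hcon] at hi
  omega

lemma finite_eq {p : ℕ → ℕ} (hp : IsPartition p) {k : ℕ} (hk : 0 < k) :
    {i | p i = k}.Finite := by
  apply (finite_ge hp hk).subset
  intro i hi
  simp only [Set.mem_setOf_eq] at hi ⊢
  omega

lemma split_ge {p : ℕ → ℕ} (hp : IsPartition p) {v : ℕ} (hv : 0 < v) :
    {i | v ≤ p i}.ncard = {i | p i = v}.ncard + {i | v + 1 ≤ p i}.ncard := by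
  have hset : {i | v ≤ p i} = {i | p i = v} ∪ {i | v + 1 ≤ p i} := by
    ext i; simp only [Set.mem_setOf_eq, Set.mem_union]; omega
  rw [hset]
  refine Set.ncard_union_eq ?_ (finite_eq hp hv) (finite_ge hp (by omega))
  rw [Set.disjoint_left]; intro i hi hi'
  simp only [Set.mem_setOf_eq] at hi hi'; omega

lemma icc_insert {v M : ℕ} (h : v ≤ M) :
    Finset.Icc v M = insert v (Finset.Icc (v + 1) M) := by
  ext k; simp only [Finset.mem_Icc, Finset.mem_insert]; omega

lemma count_as_sum {p : ℕ → ℕ} (hp : IsPartition p) {M : ℕ} (hM : p 0 ≤ M) :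
    ∀ d v, 0 < v → M + 1 - v ≤ d →
    {i | v ≤ p i}.ncard = ∑ k ∈ Finset.Icc v M, {i | p i = k}.ncard := by
  intro d
  induction d with
  | zero =>
      intro v hv hd
      have hMv : M < v := by omega
      have hempty : {i | v ≤ p i} = ∅ := by
        ext i
        simp only [Set.mem_setOf_eq, Set.mem_empty_iff_false, iff_false]
        have := part_anti hp (Nat.zero_le i)
        omega
      rw [hempty, Finset.Icc_eq_empty (by omega)]
      simp
  | succ d ih =>
      intro v hv hd
      rcases le_or_gt v M with hle | hlt
      · rw [split_ge hp hv, ih (v + 1) (by omega) (by omega), icc_insert hle,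
          Finset.sum_insert (by simp)]
      · have hempty : {i | v ≤ p i} = ∅ := by
          ext i
          simp only [Set.mem_setOf_eq, Set.mem_empty_iff_false, iff_false]
          have := part_anti hp (Nat.zero_le i)
          omega
        rw [hempty, Finset.Icc_eq_empty (by omega)]
        simp

lemma count_add {l n r : ℕ → ℕ} (hl : IsPartition l) (hn : IsPartition n)
    (hr : IsPartitionSum r l n) {v : ℕ} (hv : 0 < v) :
    {i | v ≤ r i}.ncard = {i | v ≤ l i}.ncard + {i | v ≤ n i}.ncard := by
  set M := r 0 + l 0 + n 0 with hMdef
  have h1 := count_as_sum hr.1 (show r 0 ≤ M by omega) (M + 1 - v) v hv le_rfl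
  have h2 := count_as_sum hl (show l 0 ≤ M by omega) (M + 1 - v) v hv le_rfl
  have h3 := count_as_sum hn (show n 0 ≤ M by omega) (M + 1 - v) v hv le_rfl
  rw [h1, h2, h3, ← Finset.sum_add_distrib]
  apply Finset.sum_congr rfl
  intro k hk
  simp only [Finset.mem_Icc] at hk
  exact hr.2 k (by omega)

/-- Forward bridge: `v ≤ p j → j + 1 ≤ ncard {i | v ≤ p i}`. -/
lemma bridge_fwd {p : ℕ → ℕ} (hp : IsPartition p) {v j : ℕ} (hv : 0 < v)
    (h : v ≤ p j) : j + 1 ≤ {i | v ≤ p i}.ncard := by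
  have hsub : (↑(Finset.range (j + 1)) : Set ℕ) ⊆ {i | v ≤ p i} := by
    intro i hi
    simp only [Finset.coe_range, Set.mem_Iio] at hi
    simp only [Set.mem_setOf_eq]
    exact le_trans h (part_anti hp (by omega))
  calc j + 1 = (↑(Finset.range (j + 1)) : Set ℕ).ncard := by
        rw [Set.ncard_coe_finset, Finset.card_range]
    _ ≤ {i | v ≤ p i}.ncard := Set.ncard_le_ncard hsub (finite_ge hp hv)

/-- Backward bridge: `j + 1 ≤ ncard {i | v ≤ p i} → v ≤ p j`. -/
lemma bridge_bwd {p : ℕ → ℕ} (hp : IsPartition p) {v j : ℕ}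
    (h : j + 1 ≤ {i | v ≤ p i}.ncard) : v ≤ p j := by
  by_contra hcon
  push_neg at hcon
  have hsub : {i | v ≤ p i} ⊆ (↑(Finset.range j) : Set ℕ) := by
    intro i hi
    simp only [Set.mem_setOf_eq] at hi
    simp only [Finset.coe_range, Set.mem_Iio]
    by_contra hij
    push_neg at hij
    have := part_anti hp hij
    omega
  have := Set.ncard_le_ncard hsub (Finset.finite_toSet _)
  rw [Set.ncard_coe_finset, Finset.card_range] at this
  omega

/-- Subset bound: if `{i | v ≤ p i} ⊆ range c` then its ncard ≤ c. -/
lemma card_le_of_bound {p : ℕ → ℕ} {v c : ℕ} (h : ∀ i, v ≤ p i → i < c) :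
    {i | v ≤ p i}.ncard ≤ c := by
  have hsub : {i | v ≤ p i} ⊆ (↑(Finset.range c) : Set ℕ) := by
    intro i hi
    simp only [Set.mem_setOf_eq] at hi
    simp only [Finset.coe_range, Set.mem_Iio]
    exact h i hi
  have := Set.ncard_le_ncard hsub (Finset.finite_toSet _)
  rwa [Set.ncard_coe_finset, Finset.card_range] at this

/-- Core argument, with `a`, `b` the two summand partitions in the right roles. -/
lemma core {a b m r : ℕ → ℕ} (ha : IsPartition a) (hb : IsPartition b)
    (hm : IsPartition m) (hr : IsPartition r)
    (h1 : ∀ i, m i ≤ a i) (h2 : ∀ i, m (i + 1) ≤ b i)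
    (h3 : ∀ i, a (i + 1) ≤ m i) (h4 : ∀ i, b i ≤ m i)
    (hcount : ∀ v, 0 < v →
      {i | v ≤ r i}.ncard = {i | v ≤ a i}.ncard + {i | v ≤ b i}.ncard) :
    Interlaced0 r m := by
  intro j
  constructor
  · -- m j ≤ r (2 * j)
    rcases Nat.eq_zero_or_pos (m j) with h0 | hv
    · omega
    · apply bridge_bwd hr
      rw [hcount (m j) hv]
      have hA : j + 1 ≤ {i | m j ≤ a i}.ncard := bridge_fwd ha hv (h1 j)
      have hB : j ≤ {i | m j ≤ b i}.ncard := by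
        rcases Nat.eq_zero_or_pos j with hj0 | hj
        · omega
        · obtain ⟨j', rfl⟩ : ∃ j', j = j' + 1 := ⟨j - 1, by omega⟩
          exact bridge_fwd hb hv (h2 j')
      omega
  · -- r (2 * j + 1) ≤ m j
    by_contra hcon
    push_neg at hcon
    have hv : 0 < m j + 1 := by omega
    have hbig := bridge_fwd hr hv hcon
    rw [hcount (m j + 1) hv] at hbig
    have hA : {i | m j + 1 ≤ a i}.ncard ≤ j + 1 := by
      apply card_le_of_bound
      intro i hi
      by_contra hij
      push_neg at hij
      have h5 : a i ≤ m (i - 1) := by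
        have := h3 (i - 1)
        have : a (i - 1 + 1) ≤ m (i - 1) := h3 (i - 1)
        rwa [show i - 1 + 1 = i by omega] at this
      have h6 : m (i - 1) ≤ m j := part_anti hm (by omega)
      omega
    have hB : {i | m j + 1 ≤ b i}.ncard ≤ j := by
      apply card_le_of_bound
      intro i hi
      by_contra hij
      push_neg at hij
      have h5 : b i ≤ m i := h4 i
      have h6 : m i ≤ m j := part_anti hm hij
      omega
    omega


/-- If `(λ, μ, ν)` is `(⊞,⊟)`-storable or `(⊟,⊞)`-storable, then `λ + ν` and `μ`
are `0`-interlaced. -/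
theorem storablePMorMP_interlaced (l m n r : ℕ → ℕ)
    (hl : IsPartition l) (hm : IsPartition m) (hn : IsPartition n)
    (h : (StorablePair l m ∧ StorablePair m n) ∨ (StorablePair m l ∧ StorablePair n m))
    (hr : IsPartitionSum r l n) :
    Interlaced0 r m := by
  have hcount := fun v (hv : 0 < v) => count_add hl hn hr (v := v) hv
  rcases h with ⟨hlm, hmn⟩ | ⟨hml, hnm⟩
  · exact core hl hn hm hr.1
      (fun i => (hlm i).1) (fun i => (hmn i).2) (fun i => (hlm i).2) (fun i => (hmn i).1)
      hcount
  · exact core hn hl hm hr.1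
      (fun i => (hnm i).1) (fun i => (hml i).2) (fun i => (hnm i).2) (fun i => (hml i).1)
      (fun v hv => by rw [hcount v hv]; omega)
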